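/- A connected finite simple graph Y is bipartite if and only if κ(Y) is odd, where κ(Y) is the number of click-equivalence classes of acyclic orientations of Y. -/

import Mathlib

namespace AcycPaper

variable {V : Type*}

/-- `r` is an orientation of the graph `Y`: exactly one direction per edge. -/
def IsOrientation (Y : SimpleGraph V) (r : V → V → Prop) : Prop :=
  (∀ i j, Y.Adj i j ↔ (r i j ∨ r j i)) ∧ ∀ i j, r i j → ¬ r j i

/-- A relation is acyclic if it has no directed cycles. -/
def IsAcyclicRel (r : V → V → Prop) : Prop := ∀ v, ¬ Relation.TransGen r v v

/-- The set of acyclic orientations of `Y`. -/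
def Acyc (Y : SimpleGraph V) : Set (V → V → Prop) :=
  {r | IsOrientation Y r ∧ IsAcyclicRel r}

/-- `v` is a source: no edge points into `v`. -/
def IsSource (r : V → V → Prop) (v : V) : Prop := ∀ j, ¬ r j v

open Classical in
/-- Click (source-to-sink move) at `v`: reverse all edges incident to `v`. -/
def click (r : V → V → Prop) (v : V) : V → V → Prop :=
  fun i j => if v = i ∨ v = j then r j i else r i j

/-- One click step between acyclic orientations. -/
def ClickStep (Y : SimpleGraph V) (r r' : V → V → Prop) : Prop :=
  r ∈ Acyc Y ∧ ∃ v, IsSource r v ∧ r' = click r v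

/-- κ-equivalence: the equivalence relation generated by clicks. -/
def KEquiv (Y : SimpleGraph V) : (V → V → Prop) → (V → V → Prop) → Prop :=
  Relation.EqvGen (ClickStep Y)

/-- The set of κ-equivalence classes of acyclic orientations. -/
def KQuot (Y : SimpleGraph V) := Quot (fun a b : Acyc Y => ClickStep Y a.1 b.1)

/-- κ(Y): number of κ-equivalence classes. -/
noncomputable def kappa (Y : SimpleGraph V) : ℕ := Nat.card (KQuot Y)

/-- α(Y): number of acyclic orientations. -/
noncomputable def alpha (Y : SimpleGraph V) : ℕ := Nat.card (Acyc Y)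

section Dev

variable {V : Type*} {Y : SimpleGraph V}

open Classical in
/-- Signed indicator of an orientation. -/
noncomputable def eps (r : V → V → Prop) (i j : V) : ℤ :=
  if r i j then 1 else if r j i then -1 else 0

open Classical in
/-- Indicator function of a vertex. -/
noncomputable def delta (v u : V) : ℤ := if u = v then 1 else 0

lemma delta_self (v : V) : delta v v = 1 := by unfold delta; rw [if_pos rfl]

lemma delta_ne {v u : V} (h : u ≠ v) : delta v u = 0 := by unfold delta; rw [if_neg h]

lemma eps_pos {r : V → V → Prop} {i j : V} (h : r i j) : eps r i j = 1 := by
  unfold eps; rw [if_pos h]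

lemma eps_neg {r : V → V → Prop} {i j : V} (h1 : ¬ r i j) (h2 : r j i) :
    eps r i j = -1 := by
  unfold eps; rw [if_neg h1, if_pos h2]

lemma eps_zero {r : V → V → Prop} {i j : V} (h1 : ¬ r i j) (h2 : ¬ r j i) :
    eps r i j = 0 := by
  unfold eps; rw [if_neg h1, if_neg h2]

lemma eps_pm {r : V → V → Prop} (ho : IsOrientation Y r) {i j : V} (h : Y.Adj i j) :
    eps r i j = 1 ∨ eps r i j = -1 := by
  rcases (ho.1 i j).mp h with h' | h'
  · exact Or.inl (eps_pos h')
  · exact Or.inr (eps_neg (ho.2 j i h') h')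

lemma rel_of_eps_one {r : V → V → Prop} (ho : IsOrientation Y r) {i j : V}
    (h : Y.Adj i j) (he : eps r i j = 1) : r i j := by
  rcases (ho.1 i j).mp h with h' | h'
  · exact h'
  · rw [eps_neg (ho.2 j i h') h'] at he; exact absurd he (by decide)

/-- The invariant relation: `s` differs from `r` by (twice) a potential. -/
def Pot (Y : SimpleGraph V) (r s : V → V → Prop) : Prop :=
  ∃ ψ : V → ℤ, ∀ i j, Y.Adj i j → eps s i j = eps r i j + 2 * (ψ j - ψ i)

lemma pot_refl (r : V → V → Prop) : Pot Y r r := ⟨fun _ => 0, fun i j _ => by ring⟩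

lemma pot_symm {r s : V → V → Prop} : Pot Y r s → Pot Y s r := by
  rintro ⟨ψ, h⟩
  exact ⟨fun v => -ψ v, fun i j hadj => by have := h i j hadj; dsimp only; linarith⟩

lemma pot_trans {r s t : V → V → Prop} : Pot Y r s → Pot Y s t → Pot Y r t := by
  rintro ⟨ψ, h⟩ ⟨φ, h'⟩
  exact ⟨fun v => ψ v + φ v, fun i j hadj => by
    have := h i j hadj; have := h' i j hadj; dsimp only; linarith⟩

/- click computation lemmas -/
lemma click_left (r : V → V → Prop) (v j : V) : click r v v j = r j v := by
  unfold click; exact if_pos (Or.inl rfl)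

lemma click_right (r : V → V → Prop) (v i : V) : click r v i v = r v i := by
  unfold click; exact if_pos (Or.inr rfl)

lemma click_ne (r : V → V → Prop) {v i j : V} (hi : v ≠ i) (hj : v ≠ j) :
    click r v i j = r i j := by
  unfold click; exact if_neg (by rintro (h | h) <;> [exact hi h; exact hj h])

lemma isOrientation_click {r : V → V → Prop} (ho : IsOrientation Y r) (v : V) :
    IsOrientation Y (click r v) := by
  constructor
  · intro i j
    by_cases hi : v = i
    · subst hi
      rw [click_left, click_right]
      rw [ho.1 v j]; exact or_comm
    · by_cases hj : v = j
      · subst hj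
        rw [click_right, click_left]
        rw [ho.1 i v]; exact or_comm
      · rw [click_ne r hi hj, click_ne r hj hi]
        exact ho.1 i j
  · intro i j hij hji
    by_cases hi : v = i
    · subst hi
      rw [click_left] at hij; rw [click_right] at hji
      exact ho.2 j v hij hji
    · by_cases hj : v = j
      · subst hj
        rw [click_right] at hij; rw [click_left] at hji
        exact ho.2 v i hij hji
      · rw [click_ne r hi hj] at hij; rw [click_ne r hj hi] at hji
        exact ho.2 i j hij hji

lemma click_aux {r : V → V → Prop} (hr : r ∈ Acyc Y) {v : V} (hv : IsSource r v)
    {w u : V} (h : Relation.TransGen (click r v) w u) :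
    w ≠ v ∧ (u ≠ v → Relation.TransGen r w u) := by
  induction h with
  | @single b h' =>
    have hwv : w ≠ v := by
      rintro rfl
      rw [click_left] at h'
      exact hv b h'
    refine ⟨hwv, fun hb => ?_⟩
    rw [click_ne r (Ne.symm hwv) (Ne.symm hb)] at h'
    exact Relation.TransGen.single h'
  | @tail b c h1 h2 ih =>
    have hb : b ≠ v := by
      rintro rfl
      rw [click_left] at h2
      exact hv c h2
    obtain ⟨hw, htg⟩ := ih
    refine ⟨hw, fun hc => ?_⟩
    rw [click_ne r (Ne.symm hb) (Ne.symm hc)] at h2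
    exact Relation.TransGen.tail (htg hb) h2

lemma acyc_click {r : V → V → Prop} (hr : r ∈ Acyc Y) {v : V} (hv : IsSource r v) :
    click r v ∈ Acyc Y := by
  refine ⟨isOrientation_click hr.1 v, fun w hw => ?_⟩
  obtain ⟨hwv, h2⟩ := click_aux hr hv hw
  exact hr.2 w (h2 hwv)

lemma eps_click {r : V → V → Prop} (hr : r ∈ Acyc Y) {v : V} (hv : IsSource r v)
    {i j : V} (hadj : Y.Adj i j) :
    eps (click r v) i j = eps r i j + 2 * (delta v j - delta v i) := by
  by_cases hi : v = i
  · subst hi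
    have hj : j ≠ v := Ne.symm hadj.ne
    have hrvj : r v j := by
      rcases (hr.1.1 v j).mp hadj with h | h
      · exact h
      · exact absurd h (hv j)
    have h1 : eps (click r v) v j = -1 := by
      refine eps_neg ?_ ?_
      · rw [click_left]; exact hv j
      · rw [click_right]; exact hrvj
    rw [h1, eps_pos hrvj, delta_ne hj, delta_self]; ring
  · by_cases hj : v = j
    · subst hj
      have hi' : i ≠ v := fun h => hi h.symm
      have hrvi : r v i := by
        rcases (hr.1.1 i v).mp hadj with h | h
        · exact absurd h (hv i)
        · exact h
      have h1 : eps (click r v) i v = 1 := by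
        refine eps_pos ?_
        rw [click_right]; exact hrvi
      rw [h1, eps_neg (hv i) hrvi, delta_self, delta_ne hi']; ring
    · rw [delta_ne (fun h => hj h.symm), delta_ne (fun h => hi h.symm)]
      have e1 : click r v i j = r i j := click_ne r hi hj
      have e2 : click r v j i = r j i := click_ne r hj hi
      unfold eps; rw [e1, e2]; ring

lemma pot_click {r : V → V → Prop} (hr : r ∈ Acyc Y) {v : V} (hv : IsSource r v) :
    Pot Y r (click r v) :=
  ⟨fun u => delta v u, fun i j hadj => eps_click hr hv hadj⟩

lemma pot_of_eqvGen {a b : Acyc Y}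
    (h : Relation.EqvGen (fun a b : Acyc Y => ClickStep Y a.1 b.1) a b) :
    Pot Y a.1 b.1 := by
  induction h with
  | rel x y hxy =>
    obtain ⟨hx, v, hv, hb⟩ := hxy
    rw [hb]
    exact pot_click hx hv
  | refl x => exact pot_refl _
  | symm x y _ ih => exact pot_symm ih
  | trans x y z _ _ ih1 ih2 => exact pot_trans ih1 ih2

section Complete

variable [Fintype V]

lemma complete_aux [Nonempty V] {r : V → V → Prop} (hr : r ∈ Acyc Y) :
    ∀ n : ℕ, ∀ (s : V → V → Prop) (hs : s ∈ Acyc Y) (ψ : V → ℤ),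
    (∀ i j, Y.Adj i j → eps s i j = eps r i j + 2 * (ψ j - ψ i)) →
    (∑ u : V, (Finset.univ.sup' Finset.univ_nonempty ψ - ψ u).toNat) = n →
    (Quot.mk _ (⟨s, hs⟩ : Acyc Y) : KQuot Y) = Quot.mk _ (⟨r, hr⟩ : Acyc Y) := by
  intro n
  induction n using Nat.strong_induction_on with
  | _ n ih =>
  intro s hs ψ hψ hn
  classical
  set M : ℤ := Finset.univ.sup' Finset.univ_nonempty ψ with hM
  by_cases hconst : ∀ u : V, M ≤ ψ u
  · -- ψ is constant, hence s = r
    have hcst : ∀ u : V, ψ u = M := fun u =>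
      le_antisymm (Finset.le_sup' ψ (Finset.mem_univ u)) (hconst u)
    have hsr : s = r := by
      funext i j
      apply propext
      by_cases hadj : Y.Adj i j
      · have heq : eps s i j = eps r i j := by
          have := hψ i j hadj; rw [hcst i, hcst j] at this; linarith
        constructor
        · intro h
          exact rel_of_eps_one hr.1 hadj (by rw [← heq, eps_pos h])
        · intro h
          exact rel_of_eps_one hs.1 hadj (by rw [heq, eps_pos h])
      · constructor
        · intro h; exact absurd ((hs.1.1 i j).mpr (Or.inl h)) hadj
        · intro h; exact absurd ((hr.1.1 i j).mpr (Or.inl h)) hadj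
    subst hsr
    rfl
  · push_neg at hconst
    obtain ⟨u₀, hu₀⟩ := hconst
    set mn : ℤ := Finset.univ.inf' Finset.univ_nonempty ψ with hmn
    have hmnM : mn < M :=
      lt_of_le_of_lt (Finset.inf'_le ψ (Finset.mem_univ u₀)) hu₀
    -- find a source of s among the argmin of ψ
    set q : V → V → Prop := fun a b => s a b ∧ ψ a = mn ∧ ψ b = mn with hq
    have hwfT : WellFounded (Relation.TransGen q) := by
      haveI : IsTrans V (Relation.TransGen q) := ⟨fun _ _ _ => Relation.TransGen.trans⟩
      haveI : IsIrrefl V (Relation.TransGen q) :=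
        ⟨fun a ha => hs.2 a (Relation.TransGen.mono (fun x y h => h.1) a a ha)⟩
      exact Finite.wellFounded_of_trans_of_irrefl _
    have hwf : WellFounded q := Subrelation.wf (fun h => Relation.TransGen.single h) hwfT
    obtain ⟨w₀, -, hw₀⟩ := Finset.exists_mem_eq_inf' Finset.univ_nonempty ψ
    obtain ⟨v, hv, hvmin⟩ := hwf.has_min {u : V | ψ u = mn} ⟨w₀, hw₀.symm⟩
    have hvmn : ψ v = mn := hv
    have hsrc : IsSource s v := by
      intro u hsu
      have hadj : Y.Adj u v := (hs.1.1 u v).mpr (Or.inl hsu)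
      by_cases hup : ψ u = mn
      · exact hvmin u hup ⟨hsu, hup, hvmn⟩
      · have h1 : mn < ψ u :=
          lt_of_le_of_ne (Finset.inf'_le ψ (Finset.mem_univ u)) (Ne.symm hup)
        have h2 := hψ v u hadj.symm
        have h3 : eps s v u = -1 := eps_neg (hs.1.2 u v hsu) hsu
        rcases eps_pm hr.1 hadj.symm with h4 | h4 <;> omega
    set s' := click s v with hs'def
    have hs' : s' ∈ Acyc Y := acyc_click hs hsrc
    set ψ' : V → ℤ := fun u => ψ u + delta v u with hψ'
    have hψ'v : ψ' v = ψ v + 1 := by simp [hψ', delta_self]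
    have hψ'ne : ∀ u, u ≠ v → ψ' u = ψ u := by
      intro u hu; simp [hψ', delta_ne hu]
    have hpot' : ∀ i j, Y.Adj i j → eps s' i j = eps r i j + 2 * (ψ' j - ψ' i) := by
      intro i j hadj
      have h1 := eps_click hs hsrc (v := v) hadj
      have h2 := hψ i j hadj
      rw [hs'def, h1, h2]
      simp only [hψ']
      ring
    -- the new supremum is still M
    have hsupψ' : Finset.univ.sup' Finset.univ_nonempty ψ' = M := by
      apply le_antisymm
      · apply Finset.sup'_le
        intro u _
        by_cases hu : u = v
        · subst hu; rw [hψ'v, hvmn]; omega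
        · rw [hψ'ne u hu]; exact Finset.le_sup' ψ (Finset.mem_univ u)
      · obtain ⟨w, -, hw⟩ := Finset.exists_mem_eq_sup' Finset.univ_nonempty ψ
        have hwv : w ≠ v := by
          rintro rfl; rw [hvmn] at hw; omega
        calc M = ψ' w := by rw [hM, hw, hψ'ne w hwv]
        _ ≤ _ := Finset.le_sup' ψ' (Finset.mem_univ w)
    -- the measure drops
    have hmeas : (∑ u : V, (Finset.univ.sup' Finset.univ_nonempty ψ' - ψ' u).toNat) < n := by
      rw [hsupψ']
      have hvmem := Finset.mem_univ v
      rw [← Finset.add_sum_erase _ _ hvmem] at hn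
      rw [← Finset.add_sum_erase _ (fun u => (M - ψ' u).toNat) hvmem]
      have hrest : ∑ u ∈ Finset.univ.erase v, (M - ψ' u).toNat
          = ∑ u ∈ Finset.univ.erase v, (M - ψ u).toNat := by
        apply Finset.sum_congr rfl
        intro u hu
        rw [hψ'ne u (Finset.ne_of_mem_erase hu)]
      rw [hrest, hψ'v, hvmn]
      omega
    have hstep : (Quot.mk _ (⟨s, hs⟩ : Acyc Y) : KQuot Y) = Quot.mk _ (⟨s', hs'⟩ : Acyc Y) :=
      Quot.sound ⟨hs, v, hsrc, hs'def⟩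
    rw [hstep]
    exact ih _ hmeas s' hs' ψ' hpot' rfl

lemma complete {r s : V → V → Prop} (hr : r ∈ Acyc Y) (hs : s ∈ Acyc Y)
    (h : Pot Y r s) :
    (Quot.mk _ (⟨r, hr⟩ : Acyc Y) : KQuot Y) = Quot.mk _ (⟨s, hs⟩ : Acyc Y) := by
  cases isEmpty_or_nonempty V with
  | inl hemp =>
    have : r = s := by funext i; exact isEmptyElim i
    subst this; rfl
  | inr hne =>
    obtain ⟨ψ, hψ⟩ := h
    exact (complete_aux hr _ s hs ψ hψ rfl).symm

end Complete

/- Reversal -/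

lemma acyc_flip {r : V → V → Prop} (hr : r ∈ Acyc Y) :
    (fun i j => r j i) ∈ Acyc Y := by
  refine ⟨⟨fun i j => ?_, fun i j h h' => hr.1.2 j i h h'⟩, fun v hv => ?_⟩
  · rw [hr.1.1 i j]; exact or_comm
  · exact hr.2 v (Relation.transGen_swap.mp hv)

lemma eps_flip {r : V → V → Prop} (ho : IsOrientation Y r) (i j : V) :
    eps (fun i j => r j i) i j = - eps r i j := by
  by_cases h1 : r i j
  · have hL : eps (fun i j => r j i) i j = -1 := eps_neg (ho.2 i j h1) h1
    rw [hL, eps_pos h1]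
  · by_cases h2 : r j i
    · have hL : eps (fun i j => r j i) i j = 1 := eps_pos h2
      rw [hL, eps_neg h1 h2]; ring
    · have hL : eps (fun i j => r j i) i j = 0 := eps_zero h2 h1
      rw [hL, eps_zero h1 h2]; ring

variable (Y) in
noncomputable def iota [Fintype V] : KQuot Y → KQuot Y :=
  Quot.lift
    (fun a : Acyc Y =>
      (Quot.mk _ (⟨fun i j => a.1 j i, acyc_flip a.2⟩ : Acyc Y) : KQuot Y))
    (by
      rintro a b ⟨ha, v, hv, hb⟩
      apply complete (acyc_flip a.2) (acyc_flip b.2)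
      refine ⟨fun u => - delta v u, fun i j hadj => ?_⟩
      have h1 : eps (fun i j => b.1 j i) i j = - eps b.1 i j := eps_flip b.2.1 i j
      have h2 : eps (fun i j => a.1 j i) i j = - eps a.1 i j := eps_flip a.2.1 i j
      have h3 : eps b.1 i j = eps a.1 i j + 2 * (delta v j - delta v i) := by
        rw [hb]; exact eps_click ha hv hadj
      rw [h1, h2, h3]
      ring)

lemma iota_mk [Fintype V] (a : Acyc Y) :
    iota Y (Quot.mk _ a) = Quot.mk _ (⟨fun i j => a.1 j i, acyc_flip a.2⟩ : Acyc Y) := rfl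

lemma iota_invol [Fintype V] : ∀ q : KQuot Y, iota Y (iota Y q) = q := by
  apply Quot.ind
  intro a
  rw [iota_mk, iota_mk]

/- fixed points of iota -/

lemma fixed_iff [Fintype V] (a : Acyc Y) :
    iota Y (Quot.mk _ a) = Quot.mk _ a ↔
      ∃ φ : V → ℤ, ∀ i j, Y.Adj i j → eps a.1 i j = φ j - φ i := by
  rw [iota_mk]
  constructor
  · intro h
    have hEq := Quot.eqvGen_exact h
    have hpot : Pot Y (fun i j => a.1 j i) a.1 := by
      have := pot_of_eqvGen hEq
      exact this
    obtain ⟨ψ, hψ⟩ := hpot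
    refine ⟨ψ, fun i j hadj => ?_⟩
    have h1 := hψ i j hadj
    rw [eps_flip a.2.1 i j] at h1
    linarith
  · rintro ⟨φ, hφ⟩
    apply complete (acyc_flip a.2) a.2
    refine ⟨φ, fun i j hadj => ?_⟩
    rw [eps_flip a.2.1 i j, hφ i j hadj]
    ring

/- fixed point ⇒ 2-colorable -/
lemma colorable_of_fixed {r : V → V → Prop} (ho : IsOrientation Y r)
    (φ : V → ℤ) (h : ∀ i j, Y.Adj i j → eps r i j = φ j - φ i) :
    Y.Colorable 2 := by
  have hcol : ∀ i j, Y.Adj i j → ((φ i : ZMod 2) ≠ (φ j : ZMod 2)) := by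
    intro i j hadj heq
    have h1 := h i j hadj
    have h2 : ((φ j - φ i : ℤ) : ZMod 2) = 0 := by
      push_cast; rw [heq]; ring
    rw [← h1] at h2
    rcases eps_pm ho hadj with h3 | h3 <;> rw [h3] at h2 <;>
      exact absurd h2 (by decide)
  have C : Y.Coloring (ZMod 2) := SimpleGraph.Coloring.mk (fun v => (φ v : ZMod 2))
    (fun hadj => hcol _ _ hadj)
  have h2 : Fintype.card (ZMod 2) = 2 := rfl
  exact h2 ▸ C.colorable

/- 2-colorable ⇒ existence of a fixed acyclic orientation -/
lemma exists_fixed_of_colorable (hcol : Y.Colorable 2) :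
    ∃ (r : V → V → Prop) (hr : r ∈ Acyc Y) (φ : V → ℤ),
      ∀ i j, Y.Adj i j → eps r i j = φ j - φ i := by
  obtain ⟨C⟩ := hcol
  set φ : V → ℤ := fun v => ((C v).val : ℤ) with hφ
  have hφ01 : ∀ v, φ v = 0 ∨ φ v = 1 := by
    intro v
    have h := (C v).isLt
    simp only [hφ]
    omega
  have hne : ∀ {i j}, Y.Adj i j → φ i ≠ φ j := by
    intro i j hadj heq
    have hval : (C i).val = (C j).val := by
      have h' := heq; simp only [hφ] at h'; exact_mod_cast h'
    exact C.valid hadj (Fin.ext hval)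
  set r : V → V → Prop := fun i j => Y.Adj i j ∧ φ j = φ i + 1 with hr
  have horient : IsOrientation Y r := by
    constructor
    · intro i j
      constructor
      · intro hadj
        rcases hφ01 i with h1 | h1 <;> rcases hφ01 j with h2 | h2
        · exact absurd (h1.trans h2.symm) (hne hadj)
        · exact Or.inl ⟨hadj, by omega⟩
        · exact Or.inr ⟨hadj.symm, by omega⟩
        · exact absurd (h1.trans h2.symm) (hne hadj)
      · rintro (⟨h, -⟩ | ⟨h, -⟩)
        · exact h
        · exact h.symm
    · rintro i j ⟨-, h1⟩ ⟨-, h2⟩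
      omega
  have hacyc : IsAcyclicRel r := by
    have h2step : ∀ a b c, r a b → r b c → False := by
      rintro a b c ⟨-, h1⟩ ⟨-, h2⟩
      rcases hφ01 a with h3 | h3 <;> rcases hφ01 c with h4 | h4 <;> omega
    have hone : ∀ a b, Relation.TransGen r a b → r a b := by
      intro a b h
      induction h with
      | single h => exact h
      | tail h1 h2 ih => exact (h2step _ _ _ ih h2).elim
    intro v hv
    obtain ⟨-, h1⟩ := hone v v hv
    omega
  refine ⟨r, ⟨horient, hacyc⟩, φ, fun i j hadj => ?_⟩
  by_cases hij : r i j
  · rw [eps_pos hij]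
    obtain ⟨-, h1⟩ := hij
    omega
  · have hji : r j i := by
      rcases (horient.1 i j).mp hadj with h | h
      · exact absurd h hij
      · exact h
    rw [eps_neg hij hji]
    obtain ⟨-, h1⟩ := hji
    omega

/- uniqueness of the fixed class (connected case) -/
lemma fixed_unique [Fintype V] (hY : Y.Connected)
    {r s : V → V → Prop} (hr : r ∈ Acyc Y) (hs : s ∈ Acyc Y)
    (φ χ : V → ℤ)
    (hφ : ∀ i j, Y.Adj i j → eps r i j = φ j - φ i)
    (hχ : ∀ i j, Y.Adj i j → eps s i j = χ j - χ i) :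
    (Quot.mk _ (⟨r, hr⟩ : Acyc Y) : KQuot Y) = Quot.mk _ (⟨s, hs⟩ : Acyc Y) := by
  set g : V → ℤ := fun v => φ v - χ v with hg
  have hwalk : ∀ x y : V, Y.Walk x y → ∃ k : ℤ, g x - g y = 2 * k := by
    intro x y w
    induction w with
    | nil => exact ⟨0, by ring⟩
    | @cons x c y hadj p ih =>
      obtain ⟨k, hk⟩ := ih
      have h1 := hφ x c hadj
      have h2 := hχ x c hadj
      have hgc : g x - g c = eps s x c - eps r x c := by
        simp only [hg]; omega
      rcases eps_pm hr.1 hadj with e1 | e1 <;> rcases eps_pm hs.1 hadj with e2 | e2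
      · exact ⟨k, by omega⟩
      · exact ⟨k - 1, by omega⟩
      · exact ⟨k + 1, by omega⟩
      · exact ⟨k, by omega⟩
  haveI : Nonempty V := hY.nonempty
  set v₀ : V := Classical.arbitrary V with hv₀
  have hEv : ∀ v : V, ∃ k : ℤ, g v - g v₀ = 2 * k := by
    intro v
    obtain ⟨w⟩ := hY.preconnected v v₀
    exact hwalk v v₀ w
  choose ρ hρ using hEv
  apply complete hr hs
  refine ⟨fun v => - ρ v, fun i j hadj => ?_⟩
  dsimp only
  have h1 := hφ i j hadj
  have h2 := hχ i j hadj
  have h3 := hρ i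
  have h4 := hρ j
  simp only [hg] at h3 h4
  omega

/- parity of involutions -/
section Parity

lemma even_card_of_invol {α : Type*} [DecidableEq α] (f : α → α) (hf : ∀ a, f (f a) = a)
    (s : Finset α) (hcl : ∀ a ∈ s, f a ∈ s) (hne : ∀ a ∈ s, f a ≠ a) :
    Even s.card := by
  induction s using Finset.strongInduction with
  | _ s ih =>
    rcases s.eq_empty_or_nonempty with rfl | ⟨a, ha⟩
    · simp
    · have hfa : f a ∈ s := hcl a ha
      have hfa' : f a ≠ a := hne a ha
      set t : Finset α := (s.erase a).erase (f a) with ht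
      have hsub : t ⊆ s := fun x hx =>
        Finset.mem_of_mem_erase (Finset.mem_of_mem_erase hx)
      have hanot : a ∉ t := by simp [ht]
      have htsub : t ⊂ s := (Finset.ssubset_iff_of_subset hsub).mpr ⟨a, ha, hanot⟩
      have hcard : t.card = s.card - 2 := by
        rw [ht, Finset.card_erase_of_mem, Finset.card_erase_of_mem ha]
        · rfl
        · exact Finset.mem_erase.mpr ⟨hfa', hfa⟩
      have h2 : 2 ≤ s.card :=
        Finset.one_lt_card.mpr ⟨a, ha, f a, hfa, (hne a ha).symm⟩
      have hclt : ∀ b ∈ t, f b ∈ t := by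
        intro b hb
        obtain ⟨hbfa, hbs⟩ := Finset.mem_erase.mp hb
        obtain ⟨hba, hbs'⟩ := Finset.mem_erase.mp hbs
        refine Finset.mem_erase.mpr ⟨?_, Finset.mem_erase.mpr ⟨?_, hcl b hbs'⟩⟩
        · intro h
          refine hba ?_
          calc b = f (f b) := (hf b).symm
          _ = f (f a) := by rw [h]
          _ = a := hf a
        · intro h
          exact hbfa (by rw [← h, hf])
      have hnet : ∀ b ∈ t, f b ≠ b := fun b hb => hne b (hsub hb)
      obtain ⟨m, hm⟩ := ih t htsub hclt hnet
      exact ⟨m + 1, by omega⟩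

lemma card_modEq_fixed {α : Type*} [Finite α] (f : α → α) (hf : ∀ a, f (f a) = a) :
    Nat.card α ≡ Nat.card {a : α // f a = a} [MOD 2] := by
  classical
  haveI := Fintype.ofFinite α
  rw [Nat.card_eq_fintype_card, Nat.card_eq_fintype_card]
  rw [Fintype.card_subtype]
  have hsplit := Finset.card_filter_add_card_filter_not
    (s := (Finset.univ : Finset α)) (p := fun a => f a = a)
  have heven : Even ((Finset.univ.filter fun a => ¬ f a = a).card) := by
    apply even_card_of_invol f hf
    · intro a ha
      rw [Finset.mem_filter] at ha ⊢
      refine ⟨Finset.mem_univ _, fun h => ha.2 ?_⟩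
      rw [← h, hf]
    · intro a ha
      rw [Finset.mem_filter] at ha
      exact ha.2
  obtain ⟨m, hm⟩ := heven
  have huniv : (Finset.univ : Finset α).card = Fintype.card α := Finset.card_univ
  unfold Nat.ModEq
  omega

end Parity

end Dev


/-- a connected graph Y is bipartite iff κ(Y), the number of
click-equivalence classes of acyclic orientations, is odd. -/
theorem bipartite_iff_kappa_odd {V : Type*} [Fintype V] (Y : SimpleGraph V)
    (hY : Y.Connected) :
    Y.Colorable 2 ↔ Odd (kappa Y) := by
  haveI : Finite (KQuot Y) :=
    Finite.of_surjective (Quot.mk _) Quot.mk_surjective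
  have hcong := card_modEq_fixed (iota Y) (iota_invol)
  constructor
  · intro hcol
    have hone : Nat.card {q : KQuot Y // iota Y q = q} = 1 := by
      rw [Nat.card_eq_one_iff_unique]
      constructor
      · constructor
        rintro ⟨qx, hx⟩ ⟨qy, hy⟩
        obtain ⟨a, rfl⟩ := Quot.exists_rep qx
        obtain ⟨b, rfl⟩ := Quot.exists_rep qy
        obtain ⟨φ, hφ⟩ := (fixed_iff a).mp hx
        obtain ⟨χ, hχ⟩ := (fixed_iff b).mp hy
        apply Subtype.ext
        exact fixed_unique hY a.2 b.2 φ χ hφ hχ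
      · obtain ⟨r, hr, φ, hφ⟩ := exists_fixed_of_colorable hcol
        exact ⟨⟨Quot.mk _ ⟨r, hr⟩, (fixed_iff ⟨r, hr⟩).mpr ⟨φ, hφ⟩⟩⟩
    rw [Nat.odd_iff]
    rw [hone] at hcong
    unfold Nat.ModEq at hcong
    unfold kappa
    omega
  · intro hodd
    by_contra hcol
    have hzero : Nat.card {q : KQuot Y // iota Y q = q} = 0 := by
      have : IsEmpty {q : KQuot Y // iota Y q = q} := by
        constructor
        rintro ⟨q, hq⟩
        obtain ⟨a, rfl⟩ := Quot.exists_rep q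
        obtain ⟨φ, hφ⟩ := (fixed_iff a).mp hq
        exact hcol (colorable_of_fixed a.2.1 φ hφ)
      exact Nat.card_of_isEmpty
    rw [Nat.odd_iff] at hodd
    unfold kappa at hodd
    rw [hzero] at hcong
    unfold Nat.ModEq at hcong
    omega

end AcycPaper
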